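/- Let N be an FS^op-module over ℚ and let m ≥ 1. Then the following are equivalent: (i) there exist finitely many nonempty finite types F₁, …, F_k, each of cardinality ≤ m, and a natural transformation ⊕_{j=1}^k P_{F_j} ⟶ N that is pointwise surjective (i.e., N is a quotient of a finite direct sum of principal projectives indexed by sets of cardinality ≤ m); (ii) for every object E of FS, the vector space N(E) is finite-dimensional and is spanned by the union, over all surjections φ : E → F with |F| ≤ m, of the images of the pullback maps N(φ) : N(F) → N(E). -/

import Mathlib

open CategoryTheory Opposite

/-- An object of the category `FS`: a nonempty finite type. -/
structure FSObj : Type 1 where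
  carrier : Type
  [fintype : Fintype carrier]
  [nonempty : Nonempty carrier]

attribute [instance] FSObj.fintype FSObj.nonempty

/-- The category `FS` of nonempty finite types with surjections. -/
instance : Category FSObj where
  Hom A B := {f : A.carrier → B.carrier // Function.Surjective f}
  id A := ⟨id, Function.surjective_id⟩
  comp f g := ⟨g.1 ∘ f.1, g.2.comp f.2⟩

/-- An `FSᵒᵖ`-module `N` over `ℚ` is generated in degrees `≤ m` if for every
object `E` of `FS`, the vector space `N(E)` is spanned by the images of the
pullback maps `N(φ) : N(F) → N(E)` over all surjections `φ : E → F` with `|F| ≤ m`. -/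
def GeneratedInDegreesLE (N : FSObjᵒᵖ ⥤ ModuleCat ℚ) (m : ℕ) : Prop :=
  ∀ E : FSObj, Submodule.span ℚ
    {x : N.obj (op E) | ∃ (F : FSObj) (φ : E ⟶ F) (y : N.obj (op F)),
      Fintype.card F.carrier ≤ m ∧ x = N.map φ.op y} = ⊤

/-- The principal projective `FSᵒᵖ`-module `P_F`: it sends a nonempty finite type `E`
to the free `ℚ`-vector space on the set of surjections `E → F`, with pullback along a
surjection `φ : E' → E` sending a basis element `ψ : E → F` to `ψ ∘ φ : E' → F`. -/
noncomputable def principalProj (F : FSObj) : FSObjᵒᵖ ⥤ ModuleCat ℚ where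
  obj E := ModuleCat.of ℚ ((unop E ⟶ F) →₀ ℚ)
  map {E E'} φ := ModuleCat.ofHom (Finsupp.lmapDomain ℚ ℚ (fun ψ => φ.unop ≫ ψ))
  map_id E := by
    show ModuleCat.ofHom (Finsupp.lmapDomain ℚ ℚ (fun ψ : unop E ⟶ F => (𝟙 E : E ⟶ E).unop ≫ ψ)) = _
    have h : (fun ψ : unop E ⟶ F => (𝟙 E : E ⟶ E).unop ≫ ψ) = id := by
      funext ψ; simp
    rw [h, Finsupp.lmapDomain_id]; rfl
  map_comp {E E' E''} φ φ' := by
    show ModuleCat.ofHom (Finsupp.lmapDomain ℚ ℚ (fun ψ : unop E ⟶ F => (φ ≫ φ').unop ≫ ψ)) = _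
    have h : (fun ψ : unop E ⟶ F => (φ ≫ φ').unop ≫ ψ) =
        (fun ψ : unop E' ⟶ F => φ'.unop ≫ ψ) ∘ (fun ψ : unop E ⟶ F => φ.unop ≫ ψ) := by
      funext ψ; simp
    rw [h, Finsupp.lmapDomain_comp]; rfl

open CategoryTheory.Limits

noncomputable instance : HasFiniteBiproducts (FSObjᵒᵖ ⥤ ModuleCat ℚ) :=
  HasFiniteBiproducts.of_hasFiniteProducts


instance FSHom.finite (A B : FSObj) : Finite (A ⟶ B) := Subtype.finite

noncomputable def toN (N : FSObjᵒᵖ ⥤ ModuleCat ℚ) (F : FSObj) (y : N.obj (op F)) :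
    principalProj F ⟶ N where
  app E := ModuleCat.ofHom (Finsupp.linearCombination ℚ (fun ψ : unop E ⟶ F => N.map ψ.op y))
  naturality E E' φ := by
    apply ModuleCat.hom_ext
    apply Finsupp.lhom_ext
    intro ψ r
    show Finsupp.linearCombination ℚ (fun ψ : unop E' ⟶ F => N.map ψ.op y)
        (Finsupp.lmapDomain ℚ ℚ (fun χ : unop E ⟶ F => φ.unop ≫ χ) (Finsupp.single ψ r)) =
      N.map φ (Finsupp.linearCombination ℚ (fun ψ : unop E ⟶ F => N.map ψ.op y)
        (Finsupp.single ψ r))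
    rw [Finsupp.lmapDomain_apply, Finsupp.mapDomain_single, Finsupp.linearCombination_single,
      Finsupp.linearCombination_single, map_smul]
    rw [show (φ.unop ≫ ψ).op = ψ.op ≫ φ by rw [op_comp, Quiver.Hom.op_unop], N.map_comp]
    rfl

section Forward
variable (N : FSObjᵒᵖ ⥤ ModuleCat ℚ)

lemma biprod_decomp {k : ℕ} (F : Fin k → FSObj) (E : FSObjᵒᵖ)
    (z : (⨁ fun j => principalProj (F j)).obj E) :
    z = ∑ j, (biproduct.ι (fun j => principalProj (F j)) j).app E
        ((biproduct.π (fun j => principalProj (F j)) j).app E z) := by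
  have ht := congrArg (fun (τ : (⨁ fun j => principalProj (F j)) ⟶ _) => τ.app E)
    (biproduct.total (f := fun j => principalProj (F j)))
  simp only [NatTrans.app_sum, NatTrans.comp_app] at ht
  have := congrArg (fun f => ModuleCat.Hom.hom f z) ht
  simp only [ModuleCat.hom_sum, LinearMap.sum_apply, ModuleCat.hom_comp, LinearMap.comp_apply,
    NatTrans.id_app, ModuleCat.hom_id, LinearMap.id_apply] at this
  exact this.symm

lemma biprod_fd {k : ℕ} (F : Fin k → FSObj) (E : FSObj) :
    FiniteDimensional ℚ ((⨁ fun j => principalProj (F j)).obj (op E)) := by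
  let L : (⨁ fun j => principalProj (F j)).obj (op E) →ₗ[ℚ] (∀ j, ((E ⟶ F j) →₀ ℚ)) :=
    LinearMap.pi (fun j => ((biproduct.π (fun j => principalProj (F j)) j).app (op E)).hom)
  have hL : Function.Injective L := by
    intro a b hab
    rw [biprod_decomp F (op E) a, biprod_decomp F (op E) b]
    refine Finset.sum_congr rfl (fun j _ => ?_)
    have := congrFun hab j
    simp only [L, LinearMap.pi_apply] at this
    exact congrArg _ this
  exact FiniteDimensional.of_injective L hL
end Forward

lemma key_single {k : ℕ} (F : Fin k → FSObj)
    (η : (⨁ fun j => principalProj (F j)) ⟶ N) (E : FSObj) (j : Fin k) (ψ : E ⟶ F j) :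
    η.app (op E) ((biproduct.ι (fun j => principalProj (F j)) j).app (op E)
        (Finsupp.single ψ (1:ℚ))) =
      N.map ψ.op (η.app (op (F j)) ((biproduct.ι (fun j => principalProj (F j)) j).app
        (op (F j)) (Finsupp.single (𝟙 (F j)) (1:ℚ)))) := by
  have h1 : (Finsupp.single ψ (1:ℚ)) = (principalProj (F j)).map ψ.op
      (Finsupp.single (𝟙 (F j)) (1:ℚ)) := by
    show _ = Finsupp.lmapDomain ℚ ℚ (fun χ : F j ⟶ F j => ψ.op.unop ≫ χ) _
    rw [Finsupp.lmapDomain_apply, Finsupp.mapDomain_single]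
    congr 1
  rw [h1]
  have h2 : (biproduct.ι (fun j => principalProj (F j)) j).app (op E)
        ((principalProj (F j)).map ψ.op (Finsupp.single (𝟙 (F j)) (1:ℚ))) =
      (⨁ fun j => principalProj (F j)).map ψ.op
        ((biproduct.ι (fun j => principalProj (F j)) j).app (op (F j))
          (Finsupp.single (𝟙 (F j)) (1:ℚ))) :=
    ConcreteCategory.congr_hom
      ((biproduct.ι (fun j => principalProj (F j)) j).naturality ψ.op)
      (Finsupp.single (𝟙 (F j)) (1:ℚ))
  rw [h2]
  exact ConcreteCategory.congr_hom (η.naturality ψ.op)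
    ((biproduct.ι (fun j => principalProj (F j)) j).app (op (F j))
      (Finsupp.single (𝟙 (F j)) (1:ℚ)))

/-- an `FSᵒᵖ`-module `N` is a pointwise-surjective quotient of a finite
direct sum of principal projectives `P_{F_j}` with `|F_j| ≤ m` if and only if each
`N(E)` is finite-dimensional and spanned by the images of the pullbacks `N(φ)` along
surjections `φ : E → F` with `|F| ≤ m`. -/
theorem stmt_4 (N : FSObjᵒᵖ ⥤ ModuleCat ℚ) (m : ℕ) (hm : 1 ≤ m) :
    (∃ (k : ℕ) (F : Fin k → FSObj),
      (∀ j, Fintype.card (F j).carrier ≤ m) ∧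
      ∃ η : (⨁ fun j => principalProj (F j)) ⟶ N,
        ∀ E : FSObj, Function.Surjective (η.app (op E))) ↔
    (∀ E : FSObj, FiniteDimensional ℚ (N.obj (op E)) ∧
      Submodule.span ℚ
        {x : N.obj (op E) | ∃ (F : FSObj) (φ : E ⟶ F) (y : N.obj (op F)),
          Fintype.card F.carrier ≤ m ∧ x = N.map φ.op y} = ⊤) := by
  constructor
  · rintro ⟨k, F, hF, η, hη⟩ E
    constructor
    · have : FiniteDimensional ℚ ((⨁ fun j => principalProj (F j)).obj (op E)) :=
        biprod_fd F E
      exact Module.Finite.of_surjective (η.app (op E)).hom (hη E)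
    · rw [eq_top_iff]
      rintro x -
      obtain ⟨z, rfl⟩ := hη E x
      rw [biprod_decomp F (op E) z, map_sum]
      refine Submodule.sum_mem _ (fun j _ => ?_)
      generalize (biproduct.π (fun j => principalProj (F j)) j).app (op E) z = w
      change ((E ⟶ F j) →₀ ℚ) at w
      induction w using Finsupp.induction with
      | zero => erw [map_zero, map_zero]; exact Submodule.zero_mem _
      | single_add ψ r w _ _ ih =>
        erw [map_add, map_add]
        refine Submodule.add_mem _ ?_ ih
        have hr : (Finsupp.single ψ r) = r • Finsupp.single ψ (1:ℚ) := by
          rw [Finsupp.smul_single, smul_eq_mul, mul_one]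
        rw [hr]
        erw [map_smul, map_smul]
        refine Submodule.smul_mem _ _ (Submodule.subset_span ?_)
        exact ⟨F j, ψ, η.app (op (F j)) ((biproduct.ι (fun j => principalProj (F j)) j).app
          (op (F j)) (Finsupp.single (𝟙 (F j)) (1:ℚ))), hF j, key_single F η E j ψ⟩
  · intro h
    -- representatives of cardinalities 1..m
    let Fc : Fin m → FSObj := fun c => FSObj.mk (Fin ((c : ℕ) + 1))
    haveI hfd : ∀ c, FiniteDimensional ℚ (N.obj (op (Fc c))) := fun c => (h (Fc c)).1
    let d : Fin m → ℕ := fun c => Module.finrank ℚ (N.obj (op (Fc c)))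
    let D : ℕ := ∑ c, d c
    have hdD : ∀ c, d c ≤ D :=
      fun c => Finset.single_le_sum (fun _ _ => Nat.zero_le _) (Finset.mem_univ c)
    let b : ∀ c, Module.Basis (Fin (d c)) ℚ (N.obj (op (Fc c))) :=
      fun c => Module.finBasis ℚ _
    let s : ∀ c : Fin m, Fin D → N.obj (op (Fc c)) := fun c i =>
      if hlt : (i : ℕ) < d c then b c ⟨i, hlt⟩ else 0
    have hspan : ∀ c, Submodule.span ℚ (Set.range (s c)) = ⊤ := by
      intro c
      rw [eq_top_iff, ← (b c).span_eq]
      refine Submodule.span_mono ?_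
      rintro - ⟨i, rfl⟩
      refine ⟨⟨(i : ℕ), lt_of_lt_of_le i.2 (hdD c)⟩, ?_⟩
      simp only [s]
      rw [dif_pos i.2]
    let e : Fin m × Fin D ≃ Fin (m * D) := finProdFinEquiv
    let F' : Fin m × Fin D → FSObj := fun p => Fc p.1
    let y' : ∀ p, N.obj (op (F' p)) := fun p => s p.1 p.2
    refine ⟨m * D, fun j => F' (e.symm j), ?_, ?_⟩
    · intro j
      calc Fintype.card ((fun j => F' (e.symm j)) j).carrier
          = ((e.symm j).1 : ℕ) + 1 := Fintype.card_fin _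
        _ ≤ m := (e.symm j).1.2
    · refine ⟨biproduct.desc (fun j => toN N (F' (e.symm j)) (y' (e.symm j))), fun E => ?_⟩
      rw [← LinearMap.range_eq_top, ← top_le_iff, ← (h E).2, Submodule.span_le]
      rintro x ⟨F0, φ, y0, hcard, rfl⟩
      set η := biproduct.desc (fun j => toN N (F' (e.symm j)) (y' (e.symm j))) with hηdef
      -- key membership lemma
      have key : ∀ (j : Fin (m * D)) (ψ : E ⟶ F' (e.symm j)),
          N.map ψ.op (y' (e.symm j)) ∈ LinearMap.range (η.app (op E)).hom := by
        intro j ψ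
        have hdesc : biproduct.ι (fun j => principalProj (F' (e.symm j))) j ≫ η =
            toN N (F' (e.symm j)) (y' (e.symm j)) := biproduct.ι_desc _ _
        refine ⟨(biproduct.ι (fun j => principalProj (F' (e.symm j))) j).app (op E)
          (Finsupp.single ψ (1:ℚ)), ?_⟩
        have happ := ConcreteCategory.congr_hom
          (congrArg (fun (τ : _ ⟶ N) => τ.app (op E)) hdesc) (Finsupp.single ψ (1:ℚ))
        have ht : (toN N (F' (e.symm j)) (y' (e.symm j))).app (op E) (Finsupp.single ψ (1:ℚ)) =
            N.map ψ.op (y' (e.symm j)) := by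
          show Finsupp.linearCombination ℚ
            (fun χ : E ⟶ F' (e.symm j) => N.map χ.op (y' (e.symm j)))
            (Finsupp.single ψ 1) = _
          rw [Finsupp.linearCombination_single, one_smul]
        rw [← ht]
        exact happ
      -- transport along an isomorphism to a representative
      have hpos : 0 < Fintype.card F0.carrier := Fintype.card_pos
      let c : Fin m := ⟨Fintype.card F0.carrier - 1, by omega⟩
      have hcc : Fintype.card F0.carrier = (c : ℕ) + 1 := by
        simp only [c]; omega
      let eqv : F0.carrier ≃ Fin ((c : ℕ) + 1) :=
        Fintype.equivFinOfCardEq hcc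
      let eMor : F0 ⟶ Fc c := ⟨eqv, eqv.surjective⟩
      let eInv : Fc c ⟶ F0 := ⟨eqv.symm, eqv.symm.surjective⟩
      have hei : eMor ≫ eInv = 𝟙 F0 := by
        apply Subtype.ext
        funext a
        exact eqv.symm_apply_apply a
      let φ' : E ⟶ Fc c := φ ≫ eMor
      have hxy : N.map φ'.op (N.map eInv.op y0) = N.map φ.op y0 := by
        have h1 : eInv.op ≫ φ'.op = φ.op := by
          show eInv.op ≫ (φ ≫ eMor).op = φ.op
          rw [← op_comp, Category.assoc, hei, Category.comp_id]
        rw [← h1, N.map_comp]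
        rfl
      rw [← hxy]
      -- the set of z with N.map φ'.op z in the range is a submodule containing range (s c)
      have : (⊤ : Submodule ℚ (N.obj (op (Fc c)))) ≤
          Submodule.comap (N.map φ'.op).hom
            (LinearMap.range (η.app (op E)).hom) := by
        rw [← hspan c, Submodule.span_le]
        rintro - ⟨i, rfl⟩
        have hk := key (e (c, i))
        have hp : e.symm (e (c, i)) = (c, i) := e.symm_apply_apply _
        rw [hp] at hk
        exact hk φ'
      exact this Submodule.mem_top
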